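/- Let d ≥ 2, 1 ≤ m ≤ d, and let A_{d,m} = {e_1, ..., e_d, -e_1, ..., -e_m} ⊆ S^{d-1} ⊆ R^d, where e_i are the standard basis vectors. Then the greatest length u*(A_{d,m}) attained in any valid farthest-point iteration on A_{d,m} is at least √(d - m + 1). -/

import Mathlib

open scoped RealInnerProductSpace

/-- For `2 ≤ d` and `1 ≤ m ≤ d`, the set
`A_{d,m} = {e_1, ..., e_d, -e_1, ..., -e_m}` admits a valid farthest-point iteration reaching a
vector of length at least `√(d - m + 1)`; that is, `u*(A_{d,m}) ≥ √(d - m + 1)`. -/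
theorem stmt6 (d m : ℕ) (hd : 2 ≤ d) (hm1 : 1 ≤ m) (hmd : m ≤ d)
    (X : Finset (EuclideanSpace ℝ (Fin d)))
    (hXdef : (X : Set (EuclideanSpace ℝ (Fin d))) =
      (Set.range fun i : Fin d => EuclideanSpace.single i (1 : ℝ)) ∪
      ((fun i : Fin d => -EuclideanSpace.single i (1 : ℝ)) '' {i : Fin d | (i : ℕ) < m})) :
    ∃ u : ℕ → EuclideanSpace ℝ (Fin d),
      u 0 = 0 ∧
      (∀ i, ∃ χ ∈ X, (∀ x ∈ X, ⟪χ, u i⟫ ≤ ⟪x, u i⟫) ∧ u (i + 1) = u i + χ) ∧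
      ∃ i, Real.sqrt ((d : ℝ) - (m : ℝ) + 1) ≤ ‖u i‖ := by
  classical
  haveI : NeZero d := ⟨by omega⟩
  set N := d - m with hN
  have hmN : m + N = d := by omega
  set e : Fin d → EuclideanSpace ℝ (Fin d) := fun j => EuclideanSpace.single j 1 with he
  set u : ℕ → EuclideanSpace ℝ (Fin d) := fun i =>
    WithLp.toLp 2 (fun k : Fin d =>
      (if m ≤ (k : ℕ) ∧ (k : ℕ) < m + i then (1 : ℝ) else 0)
      - (if (k : ℕ) = 0 ∧ N < i ∧ (i - N) % 2 = 1 then (1 : ℝ) else 0)) with hu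
  have huval : ∀ i (k : Fin d), u i k =
      (if m ≤ (k : ℕ) ∧ (k : ℕ) < m + i then (1 : ℝ) else 0)
      - (if (k : ℕ) = 0 ∧ N < i ∧ (i - N) % 2 = 1 then (1 : ℝ) else 0) := fun i k => rfl
  have hX : ∀ x, x ∈ X ↔ (∃ j : Fin d, x = e j) ∨ ∃ j : Fin d, (j : ℕ) < m ∧ x = -e j := by
    intro x
    rw [← Finset.mem_coe, hXdef]
    constructor
    · rintro (⟨j, rfl⟩ | ⟨j, hj, rfl⟩)
      · exact Or.inl ⟨j, rfl⟩
      · exact Or.inr ⟨j, hj, rfl⟩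
    · rintro (⟨j, rfl⟩ | ⟨j, hj, rfl⟩)
      · exact Or.inl ⟨j, rfl⟩
      · exact Or.inr ⟨j, hj, rfl⟩
  have hinner : ∀ (j : Fin d) (v : EuclideanSpace ℝ (Fin d)), ⟪e j, v⟫ = v j := by
    intro j v
    simp [he, EuclideanSpace.inner_single_left]
  have key : ∀ i (χ : EuclideanSpace ℝ (Fin d)),
      (∀ j : Fin d, ⟪χ, u i⟫ ≤ u i j) →
      (∀ j : Fin d, (j : ℕ) < m → ⟪χ, u i⟫ ≤ -(u i j)) →
      ∀ x ∈ X, ⟪χ, u i⟫ ≤ ⟪x, u i⟫ := by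
    intro i χ h1 h2 x hx
    rcases (hX x).1 hx with ⟨j, rfl⟩ | ⟨j, hj, rfl⟩
    · rw [hinner]; exact h1 j
    · rw [inner_neg_left, hinner]; exact h2 j hj
  refine ⟨u, ?_, ?_, ?_⟩
  · ext k
    show (if m ≤ (k : ℕ) ∧ (k : ℕ) < m + 0 then (1 : ℝ) else 0)
      - (if (k : ℕ) = 0 ∧ N < 0 ∧ (0 - N) % 2 = 1 then (1 : ℝ) else 0) = 0
    split_ifs <;> first | (exfalso; omega) | norm_num
  · intro i
    rcases lt_or_ge i N with hi | hi
    · -- ascending phase: χ = e (m+i)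
      have hmi : m + i < d := by omega
      refine ⟨e ⟨m + i, hmi⟩, (hX _).2 (Or.inl ⟨_, rfl⟩), ?_, ?_⟩
      · have hc : ⟪e ⟨m + i, hmi⟩, u i⟫ = 0 := by
          rw [hinner, huval]
          simp only [Fin.val_mk]
          split_ifs <;> first | (exfalso; omega) | norm_num
        refine key i _ ?_ ?_
        · intro j; rw [hc, huval]
          split_ifs <;> first | (exfalso; omega) | norm_num
        · intro j hj; rw [hc, huval]
          split_ifs <;> first | (exfalso; omega) | norm_num
      · ext k
        have hs : e ⟨m + i, hmi⟩ k = if (k : ℕ) = m + i then (1 : ℝ) else 0 := by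
          rw [he]
          simp [EuclideanSpace.single_apply, Fin.ext_iff, eq_comm]
        show u (i + 1) k = u i k + e ⟨m + i, hmi⟩ k
        rw [huval, huval, hs]
        split_ifs <;> first | (exfalso; omega) | norm_num
    · -- cycling phase
      have h0 : (0 : ℕ) < d := by omega
      rcases Nat.even_or_odd (i - N) with hpar | hpar
      · -- u i = peak, χ = -e 0
        have hpar' : (i - N) % 2 = 0 := Nat.even_iff.1 hpar
        refine ⟨-e ⟨0, h0⟩, (hX _).2 (Or.inr ⟨⟨0, h0⟩, by show (0:ℕ) < m; omega, rfl⟩), ?_, ?_⟩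
        · have hc : ⟪-e ⟨0, h0⟩, u i⟫ = 0 := by
            rw [inner_neg_left, hinner, huval]
            simp only [Fin.val_mk]
            split_ifs <;> first | (exfalso; omega) | norm_num
          refine key i _ ?_ ?_
          · intro j; rw [hc, huval]
            split_ifs <;> first | (exfalso; omega) | norm_num
          · intro j hj; rw [hc, huval]
            split_ifs <;> first | (exfalso; omega) | norm_num
        · ext k
          have hs : (-e ⟨0, h0⟩) k = -(if (k : ℕ) = 0 then (1 : ℝ) else 0) := by
            rw [he]
            simp [EuclideanSpace.single_apply, Fin.val_eq_zero_iff]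
          show u (i + 1) k = u i k + (-e ⟨0, h0⟩) k
          rw [huval, huval, hs]
          split_ifs <;> first | (exfalso; omega) | norm_num
      · -- u i = peak - e 0, χ = e 0
        have hpar' : (i - N) % 2 = 1 := Nat.odd_iff.1 hpar
        have hiN : N < i := by omega
        refine ⟨e ⟨0, h0⟩, (hX _).2 (Or.inl ⟨_, rfl⟩), ?_, ?_⟩
        · have hc : ⟪e ⟨0, h0⟩, u i⟫ = -1 := by
            rw [hinner, huval]
            simp only [Fin.val_mk, true_and, and_true]
            split_ifs <;> first | (exfalso; omega) | norm_num
          refine key i _ ?_ ?_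
          · intro j; rw [hc, huval]
            split_ifs <;> first | (exfalso; omega) | norm_num
          · intro j hj; rw [hc, huval]
            split_ifs <;> first | (exfalso; omega) | norm_num
        · ext k
          have hs : e ⟨0, h0⟩ k = if (k : ℕ) = 0 then (1 : ℝ) else 0 := by
            rw [he]
            simp [EuclideanSpace.single_apply, Fin.val_eq_zero_iff]
          show u (i + 1) k = u i k + e ⟨0, h0⟩ k
          rw [huval, huval, hs]
          split_ifs <;> first | (exfalso; omega) | norm_num
  · refine ⟨N + 1, ?_⟩
    have hnorm : ‖u (N + 1)‖ = Real.sqrt (∑ k : Fin d, ‖u (N + 1) k‖ ^ 2) :=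
      EuclideanSpace.norm_eq _
    have hterm : ∀ k : Fin d, ‖u (N + 1) k‖ ^ 2 =
        (if m ≤ (k : ℕ) then (1 : ℝ) else 0) + (if (k : ℕ) = 0 then (1 : ℝ) else 0) := by
      intro k
      rw [huval, Real.norm_eq_abs, sq_abs]
      have hk : (k : ℕ) < d := k.isLt
      split_ifs <;> first | (exfalso; omega) | norm_num
    have hsum : (∑ k : Fin d, ‖u (N + 1) k‖ ^ 2) = (d : ℝ) - m + 1 := by
      rw [Finset.sum_congr rfl fun k _ => hterm k, Finset.sum_add_distrib]
      have h1 : (∑ k : Fin d, if m ≤ (k : ℕ) then (1 : ℝ) else 0) = (d : ℝ) - m := by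
        rw [Fin.sum_univ_eq_sum_range (fun k => if m ≤ k then (1 : ℝ) else 0) d,
          Finset.sum_boole]
        have hf : (Finset.range d).filter (fun k => m ≤ k) = Finset.Ico m d := by
          ext x
          simp only [Finset.mem_filter, Finset.mem_range, Finset.mem_Ico]
          omega
        rw [hf, Nat.card_Ico, Nat.cast_sub hmd]
      have h2 : (∑ k : Fin d, if (k : ℕ) = 0 then (1 : ℝ) else 0) = 1 := by
        have : ∀ k : Fin d, ((k : ℕ) = 0) = (k = 0) := by
          intro k
          exact propext Fin.val_eq_zero_iff
        simp only [this]
        rw [Finset.sum_ite_eq' Finset.univ (0 : Fin d) (fun _ => (1 : ℝ))]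
        simp
      rw [h1, h2]
    rw [hnorm, hsum]
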